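/- Consider the linear dispersive initial-boundary value problem ∂²w/∂t² + ∂⁴w/∂x⁴ = 1 on (0,1) × [0,∞), with w(x,0) = ∂w/∂t(x,0) = 0 for x ∈ (0,1) and w(0,t) = w(1,t) = ∂²w/∂x²(0,t) = ∂²w/∂x²(1,t) = 0 for t > 0. Then for every t ≥ 0 and every ε > 0, the solution satisfies w(·,t) ∈ H^{9/2−ε}(0,1) but w(·,t) ∉ H^{9/2}(0,1) (for generic t). -/

import Mathlib

open MeasureTheory Real Set

noncomputable section

/-- The `k`-th sine-Fourier coefficient of the explicit solution of
`∂²w/∂t² + ∂⁴w/∂x⁴ = 1` on `(0,1)` with homogeneous initial data and pinned boundary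
conditions: expanding `1 = ∑ cₖ sin(kπx)` with `cₖ = 2(1 − (−1)ᵏ)/(kπ)`, the `k`-th mode of
`w(·,t)` is `cₖ (1 − cos(k²π²t)) / (k⁴π⁴)`. -/
def solCoef (k : ℕ) (t : ℝ) : ℝ :=
  (2 * (1 - (-1 : ℝ) ^ k) / (k * π)) * (1 - Real.cos ((k : ℝ) ^ 2 * π ^ 2 * t)) /
    ((k : ℝ) ^ 4 * π ^ 4)

/-- Membership of `w(·,t)` in the Sobolev space `H^s(0,1)` for the pinned problem,
characterized by the decay of its sine-Fourier coefficients: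
`∑ₖ k^{2s} |bₖ(t)|² < ∞`. -/
def solInHs (s t : ℝ) : Prop :=
  Summable fun k : ℕ => ((k : ℝ) + 1) ^ (2 * s) * (solCoef (k + 1) t) ^ 2

open Filter Topology in
/-- Riemann–Lebesgue lemma for cosines over a measurable set of finite measure. -/
lemma rl_cos (F : Set ℝ) (hF : MeasurableSet F) (hFfin : volume F ≠ ⊤) :
    Tendsto (fun ω : ℝ => ∫ t in F, Real.cos (ω * t)) atTop (𝓝 0) := by
  have h := Real.tendsto_integral_exp_smul_cocompact (F.indicator (1 : ℝ → ℂ))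
  have h2 : ∀ w : ℝ, (∫ v : ℝ, Real.fourierChar (-(v * w)) • F.indicator (1 : ℝ → ℂ) v)
      = ∫ v in F, (Real.fourierChar (-(v * w)) : ℂ) := by
    intro w
    rw [← MeasureTheory.integral_indicator hF]
    congr 1
    funext v
    by_cases hv : v ∈ F <;> simp [hv, Circle.smul_def]
  simp only [h2] at h
  have hre : ∀ w : ℝ, (∫ v in F, (Real.fourierChar (-(v * w)) : ℂ)).re
      = ∫ v in F, Real.cos (2 * π * (v * w)) := by
    intro w
    have hint : IntegrableOn (fun v : ℝ => (Real.fourierChar (-(v * w)) : ℂ)) F := by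
      have h1 : IntegrableOn (fun _ : ℝ => (1 : ℝ)) F := by
        rw [integrableOn_const_iff]; exact Or.inr hFfin.lt_top
      refine h1.mono' (Continuous.aestronglyMeasurable (by continuity)) ?_
      filter_upwards with v
      exact (Circle.norm_coe _).le
    rw [show ((∫ v in F, (Real.fourierChar (-(v * w)) : ℂ)).re)
        = RCLike.re (∫ v in F, (Real.fourierChar (-(v * w)) : ℂ)) from rfl,
      ← _root_.integral_re hint]
    congr 1
    funext v
    have hch : (Real.fourierChar (-(v * w)) : ℂ)
        = Complex.exp (((2 * π * -(v * w) : ℝ) : ℂ) * Complex.I) := by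
      rw [Real.fourierChar_apply]
    have hre1 : ∀ x : ℝ, RCLike.re (Complex.exp ((x : ℂ) * Complex.I)) = Real.cos x := by
      intro x
      rw [Complex.exp_mul_I]
      simp [Complex.cos_ofReal_re, Complex.sin_ofReal_im]
    rw [hch, hre1, mul_neg, Real.cos_neg]
  have hcomp : Tendsto (fun ω : ℝ => ω / (2 * π)) atTop (cocompact ℝ) := by
    refine (Filter.tendsto_id.atTop_div_const (by positivity)).mono_right ?_
    rw [cocompact_eq_atBot_atTop]; exact le_sup_right
  have hfin := ((Complex.continuous_re.tendsto 0).comp (h.comp hcomp))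
  simp only [Function.comp_def, Complex.zero_re, hre] at hfin
  refine hfin.congr ?_
  intro ω
  congr 1
  funext v
  congr 1
  field_simp

/-- The summand corresponding to the odd mode `2m+1` in the `H^{9/2}` norm, up to constant. -/
def oddTerm (m : ℕ) (t : ℝ) : ℝ :=
  (1 - Real.cos (((2 * m + 1 : ℕ) : ℝ) ^ 2 * π ^ 2 * t)) ^ 2 / (2 * m + 1)

lemma oddTerm_nonneg (m : ℕ) (t : ℝ) : 0 ≤ oddTerm m t := by
  unfold oddTerm; positivity

lemma term_eq (m : ℕ) (t : ℝ) :
    (((2 * m : ℕ) : ℝ) + 1) ^ (2 * (9 / 2 : ℝ)) * (solCoef (2 * m + 1) t) ^ 2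
      = (16 / π ^ 10) * oddTerm m t := by
  have hπ : (0:ℝ) < π := Real.pi_pos
  have hn : (0:ℝ) < ((2 * m : ℕ) : ℝ) + 1 := by positivity
  have h9 : (((2 * m : ℕ) : ℝ) + 1) ^ (2 * (9 / 2 : ℝ))
      = (((2 * m : ℕ) : ℝ) + 1) ^ (9 : ℕ) := by
    rw [show (2 * (9 / 2 : ℝ)) = ((9 : ℕ) : ℝ) by norm_num, Real.rpow_natCast]
  have hodd : ((-1 : ℝ)) ^ (2 * m + 1) = -1 := Odd.neg_one_pow ⟨m, by ring⟩
  rw [h9]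
  unfold solCoef oddTerm
  rw [hodd]
  have hc : ((2 * m + 1 : ℕ) : ℝ) = ((2 * m : ℕ) : ℝ) + 1 := by push_cast; ring
  rw [hc]
  field_simp
  push_cast
  ring

lemma summable_oddTerm_of_solInHs {t : ℝ} (h : solInHs (9 / 2) t) :
    Summable fun m : ℕ => oddTerm m t := by
  unfold solInHs at h
  have h2 := h.comp_injective (fun a b hab => by simpa using hab :
    Function.Injective (fun m : ℕ => 2 * m))
  have h3 : Summable fun m : ℕ => (16 / π ^ 10) * oddTerm m t := by
    refine h2.congr fun m => ?_
    simpa using term_eq m t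
  have hπ : (16 / π ^ 10 : ℝ) ≠ 0 := by positivity
  have := h3.mul_left (16 / π ^ 10)⁻¹
  refine this.congr fun m => ?_
  field_simp

/-- The set of times in `[0,T]` at which all partial sums are bounded by `M`. -/
def boundedSet (M T : ℕ) : Set ℝ :=
  {t | t ∈ Icc (0:ℝ) T ∧ ∀ N : ℕ, (∑ m ∈ Finset.range N, oddTerm m t) ≤ M}

lemma continuous_partialSum (N : ℕ) :
    Continuous fun t : ℝ => ∑ m ∈ Finset.range N, oddTerm m t := by
  refine continuous_finset_sum _ fun m _ => ?_
  unfold oddTerm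
  fun_prop

lemma measurableSet_boundedSet (M T : ℕ) : MeasurableSet (boundedSet M T) := by
  have : boundedSet M T = Icc (0:ℝ) T ∩
      ⋂ N : ℕ, (fun t : ℝ => ∑ m ∈ Finset.range N, oddTerm m t) ⁻¹' Iic (M : ℝ) := by
    ext t; simp [boundedSet, Set.mem_iInter]
  rw [this]
  exact measurableSet_Icc.inter (MeasurableSet.iInter fun N =>
    (continuous_partialSum N).measurable measurableSet_Iic)

lemma integrableOn_cos' (F : Set ℝ) (hFfin : volume F ≠ ⊤) (ω : ℝ) :
    IntegrableOn (fun t : ℝ => Real.cos (ω * t)) F := by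
  have h1 : IntegrableOn (fun _ : ℝ => (1 : ℝ)) F := by
    rw [integrableOn_const_iff]; exact Or.inr hFfin.lt_top
  refine h1.mono' (Continuous.aestronglyMeasurable (by continuity)) ?_
  filter_upwards with v
  simpa using Real.abs_cos_le_one _

lemma not_summable_one_div_two_mul_add_one :
    ¬ Summable (fun m : ℕ => 1 / (2 * (m:ℝ) + 1)) := by
  intro h
  have h2 : Summable (fun m : ℕ => 1 / ((m:ℝ) + 1)) := by
    have hs : Summable (fun m : ℕ => 1 / (2 * ((m:ℝ) + 1))) := by
      refine Summable.of_nonneg_of_le (fun m => by positivity) (fun m => ?_) h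
      gcongr
      linarith
    have := hs.mul_left 2
    refine this.congr fun m => ?_
    field_simp
  have h3 : Summable (fun n : ℕ => 1 / (n:ℝ)) := by
    rw [← summable_nat_add_iff 1]
    refine h2.congr fun m => ?_
    push_cast
    ring
  exact Real.not_summable_one_div_natCast h3


open Filter in
lemma volume_boundedSet (M T : ℕ) : volume (boundedSet M T) = 0 := by
  by_contra h0
  set F := boundedSet M T with hFdef
  have hF : MeasurableSet F := measurableSet_boundedSet M T
  have hFsub : F ⊆ Icc (0:ℝ) T := fun t ht => ht.1
  have hFfin : volume F ≠ ⊤ := by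
    refine ne_top_of_le_ne_top ?_ (measure_mono hFsub)
    rw [Real.volume_Icc]; exact ENNReal.ofReal_ne_top
  set v := (volume F).toReal with hv
  have hvpos : 0 < v := ENNReal.toReal_pos h0 hFfin
  have hrl := rl_cos F hF hFfin
  -- the sequence of frequencies tends to infinity
  have hωtend : Tendsto (fun m : ℕ => ((2*m+1:ℕ):ℝ)^2 * π^2) atTop atTop := by
    refine tendsto_atTop_mono (fun m => ?_) tendsto_natCast_atTop_atTop
    have hπ := Real.pi_gt_three
    have hm : (m:ℝ) ≥ 0 := Nat.cast_nonneg m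
    push_cast
    have h9 : (9:ℝ) ≤ π^2 := by nlinarith
    have hsq : ((m:ℝ)) ≤ (2*(m:ℝ)+1)^2 := by nlinarith
    have hmul := mul_le_mul hsq h9 (by norm_num) (by positivity)
    linarith
  have h2ωtend : Tendsto (fun m : ℕ => 2 * (((2*m+1:ℕ):ℝ)^2 * π^2)) atTop atTop :=
    hωtend.const_mul_atTop (by norm_num)
  have h1 : ∀ᶠ m : ℕ in atTop,
      |∫ t in F, Real.cos ((((2*m+1:ℕ):ℝ)^2 * π^2) * t)| < v/8 := by
    have := (hrl.comp hωtend).abs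
    rw [abs_zero] at this
    exact this.eventually_lt_const (by positivity)
  have h2 : ∀ᶠ m : ℕ in atTop,
      |∫ t in F, Real.cos ((2 * (((2*m+1:ℕ):ℝ)^2 * π^2)) * t)| < v/8 := by
    have := (hrl.comp h2ωtend).abs
    rw [abs_zero] at this
    exact this.eventually_lt_const (by positivity)
  obtain ⟨m₀, hm₀⟩ := Filter.eventually_atTop.mp (h1.and h2)
  -- lower bound for the integral of (1 - cos)² for large m
  have key : ∀ m, m₀ ≤ m →
      v ≤ ∫ t in F, (1 - Real.cos (((2*m+1:ℕ):ℝ)^2 * π^2 * t))^2 := by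
    intro m hm
    set ω : ℝ := ((2*m+1:ℕ):ℝ)^2 * π^2 with hω
    obtain ⟨hI1, hI2⟩ := hm₀ m hm
    have hsplit : ∀ t : ℝ, (1 - Real.cos (ω*t))^2
        = 3/2 - 2*Real.cos (ω*t) + Real.cos ((2*ω)*t)/2 := by
      intro t
      have hc := Real.cos_sq (ω*t)
      have harg : 2*(ω*t) = (2*ω)*t := by ring
      rw [harg] at hc
      nlinarith [hc]
    have hint1 := integrableOn_cos' F hFfin ω
    have hint2 := integrableOn_cos' F hFfin (2*ω)
    have hintc : IntegrableOn (fun _ : ℝ => (3/2:ℝ)) F := by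
      rw [integrableOn_const_iff]; exact Or.inr hFfin.lt_top
    have heq : (∫ t in F, (1 - Real.cos (ω*t))^2)
        = 3/2 * v - 2 * (∫ t in F, Real.cos (ω*t))
          + (∫ t in F, Real.cos ((2*ω)*t))/2 := by
      rw [show (fun t : ℝ => (1 - Real.cos (ω*t))^2)
          = fun t : ℝ => 3/2 - 2*Real.cos (ω*t) + Real.cos ((2*ω)*t)/2 from
          funext hsplit]
      have hintA : IntegrableOn (fun t : ℝ => (3:ℝ)/2 - 2*Real.cos (ω*t)) F :=
        hintc.sub (hint1.const_mul 2)
      have hintB : IntegrableOn (fun t : ℝ => Real.cos ((2*ω)*t)/2) F :=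
        hint2.div_const 2
      rw [MeasureTheory.integral_add hintA hintB,
        MeasureTheory.integral_sub hintc (hint1.const_mul 2),
        MeasureTheory.integral_const_mul,
        MeasureTheory.integral_div (2:ℝ) (fun a : ℝ => Real.cos ((2*ω)*a)),
        MeasureTheory.setIntegral_const]
      rw [smul_eq_mul, measureReal_def, ← hv]
      ring
    rw [heq]
    have ha1 := abs_lt.mp hI1
    have ha2 := abs_lt.mp hI2
    linarith [ha1.1, ha1.2, ha2.1, ha2.2]
  -- each oddTerm is integrable on F with nonnegative integral
  have hgint : ∀ m : ℕ, IntegrableOn (fun t => oddTerm m t) F := by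
    intro m
    have hc : Continuous fun t : ℝ => oddTerm m t := by unfold oddTerm; fun_prop
    exact (hc.integrableOn_Icc).mono_set hFsub
  have hgsqint : ∀ m : ℕ,
      IntegrableOn (fun t => (1 - Real.cos (((2*m+1:ℕ):ℝ)^2 * π^2 * t))^2) F := by
    intro m
    have hc : Continuous fun t : ℝ =>
        (1 - Real.cos (((2*m+1:ℕ):ℝ)^2 * π^2 * t))^2 := by fun_prop
    exact (hc.integrableOn_Icc).mono_set hFsub
  have hoddint : ∀ m : ℕ, (∫ t in F, oddTerm m t)
      = (∫ t in F, (1 - Real.cos (((2*m+1:ℕ):ℝ)^2 * π^2 * t))^2) / (2*m+1) := by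
    intro m
    unfold oddTerm
    rw [MeasureTheory.integral_div]
  have hoddnn : ∀ m : ℕ, 0 ≤ ∫ t in F, oddTerm m t := fun m =>
    MeasureTheory.setIntegral_nonneg hF fun t _ => oddTerm_nonneg m t
  -- integral of partial sums is bounded by M * v
  have hSN : ∀ N : ℕ, ∑ m ∈ Finset.range N, (∫ t in F, oddTerm m t) ≤ M * v := by
    intro N
    rw [← MeasureTheory.integral_finset_sum _ (fun m _ => hgint m)]
    have hle : (∫ t in F, ∑ m ∈ Finset.range N, oddTerm m t)
        ≤ ∫ _ in F, (M:ℝ) := by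
      refine MeasureTheory.setIntegral_mono_on ?_ ?_ hF ?_
      · exact ((continuous_partialSum N).integrableOn_Icc).mono_set hFsub
      · rw [integrableOn_const_iff]; exact Or.inr hFfin.lt_top
      · exact fun t ht => ht.2 N
    rw [MeasureTheory.setIntegral_const, smul_eq_mul, measureReal_def, mul_comm] at hle
    exact hle.trans_eq (by rw [mul_comm])
  -- summability of v/(2m+1), a contradiction
  have hsummable : Summable (fun m : ℕ => v / (2*(m:ℝ)+1)) := by
    refine summable_of_sum_range_le (fun m => by positivity)
      (c := M * v + ∑ m ∈ Finset.range m₀, v / (2*(m:ℝ)+1)) fun N => ?_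
    have hnn : ∀ m : ℕ, 0 ≤ v / (2*(m:ℝ)+1) := fun m => by positivity
    rcases le_or_gt N m₀ with hN | hN
    · have := Finset.sum_le_sum_of_subset_of_nonneg
        (Finset.range_subset_range.mpr hN) (fun i _ _ => hnn i)
      have hMv : (0:ℝ) ≤ M * v := by positivity
      linarith
    · have hsplitsum : ∑ m ∈ Finset.range N, v / (2*(m:ℝ)+1)
          = ∑ m ∈ Finset.range m₀, v / (2*(m:ℝ)+1)
            + ∑ m ∈ Finset.Ico m₀ N, v / (2*(m:ℝ)+1) := by
        rw [Finset.range_eq_Ico, Finset.range_eq_Ico]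
        exact (Finset.sum_Ico_consecutive (fun m : ℕ => v / (2*(m:ℝ)+1)) (Nat.zero_le m₀) hN.le).symm
      rw [hsplitsum]
      have hIco : ∑ m ∈ Finset.Ico m₀ N, v / (2*(m:ℝ)+1) ≤ M * v := by
        have step1 : ∑ m ∈ Finset.Ico m₀ N, v / (2*(m:ℝ)+1)
            ≤ ∑ m ∈ Finset.Ico m₀ N, (∫ t in F, oddTerm m t) := by
          refine Finset.sum_le_sum fun m hm => ?_
          rw [hoddint m]
          have hkey := key m (Finset.mem_Ico.mp hm).1
          have hcast : ((2*m+1:ℕ):ℝ) = 2*(m:ℝ)+1 := by push_cast; ring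
          rw [← hcast]
          gcongr
        have step2 : ∑ m ∈ Finset.Ico m₀ N, (∫ t in F, oddTerm m t)
            ≤ ∑ m ∈ Finset.range N, (∫ t in F, oddTerm m t) := by
          refine Finset.sum_le_sum_of_subset_of_nonneg ?_ (fun i _ _ => hoddnn i)
          rw [Finset.range_eq_Ico]
          exact Finset.Ico_subset_Ico (Nat.zero_le _) le_rfl
        exact step1.trans (step2.trans (hSN N))
      linarith
  have : Summable (fun m : ℕ => 1 / (2*(m:ℝ)+1)) := by
    have := hsummable.mul_left v⁻¹
    refine this.congr fun m => ?_
    field_simp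
  exact not_summable_one_div_two_mul_add_one this

theorem dispersive_regularity_limit :
    (∀ t : ℝ, 0 ≤ t → ∀ ε : ℝ, 0 < ε → solInHs (9 / 2 - ε) t) ∧
    (∀ᵐ t ∂(volume.restrict (Ici (0 : ℝ))), ¬ solInHs (9 / 2) t) := by
  constructor
  · -- Part 1: H^{9/2 - ε} regularity
    intro t ht ε hε
    unfold solInHs
    have hπ : (0:ℝ) < π := Real.pi_pos
    -- summable majorant
    have hmaj : Summable fun k : ℕ =>
        (64 / π ^ 10) * ((k:ℝ) + 1) ^ (-(1 + 2*ε) : ℝ) := by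
      have h1 : Summable (fun n : ℕ => (n:ℝ) ^ (-(1 + 2*ε) : ℝ)) :=
        Real.summable_nat_rpow.mpr (by linarith)
      have h2 := (summable_nat_add_iff 1).mpr h1
      refine (h2.mul_left (64 / π ^ 10)).congr fun k => ?_
      push_cast
      norm_num
    refine Summable.of_nonneg_of_le (fun k => by positivity) (fun k => ?_) hmaj
    set n : ℝ := (k:ℝ) + 1 with hn
    have hnpos : (0:ℝ) < n := by positivity
    have hn1 : (1:ℝ) ≤ n := by simp [hn]
    set θ : ℝ := ((k+1:ℕ):ℝ) ^ 2 * π ^ 2 * t with hθ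
    set a : ℝ := 2 * (1 - (-1:ℝ) ^ (k+1)) with ha
    set b : ℝ := 1 - Real.cos θ with hb
    have hcast : ((k+1:ℕ):ℝ) = n := by push_cast [hn]; ring
    have ha2 : a ^ 2 ≤ 16 := by
      rcases neg_one_pow_eq_or ℝ (k+1) with h | h <;> rw [ha, h] <;> norm_num
    have hb2 : b ^ 2 ≤ 4 := by
      have h1 := Real.cos_le_one θ
      have h2 := Real.neg_one_le_cos θ
      rw [hb]; nlinarith
    have hsq : (solCoef (k+1) t) ^ 2 ≤ 64 / (n ^ 10 * π ^ 10) := by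
      have heq : (solCoef (k+1) t) ^ 2 = a ^ 2 * b ^ 2 / (n ^ 10 * π ^ 10) := by
        unfold solCoef
        rw [← hθ, ← hb, ← ha, hcast]
        field_simp
      rw [heq]
      have hnum : a ^ 2 * b ^ 2 ≤ 64 := by nlinarith [sq_nonneg a, sq_nonneg b]
      gcongr
    calc n ^ (2 * (9/2 - ε)) * (solCoef (k+1) t) ^ 2
        ≤ n ^ (2 * (9/2 - ε)) * (64 / (n ^ 10 * π ^ 10)) := by
          have := Real.rpow_nonneg hnpos.le (2 * (9/2 - ε))
          exact mul_le_mul_of_nonneg_left hsq this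
      _ = (64 / π ^ 10) * n ^ (-(1 + 2*ε) : ℝ) := by
          have hexp : n ^ (2 * (9/2 - ε)) * n ^ (-(10:ℝ)) = n ^ (-(1 + 2*ε) : ℝ) := by
            rw [← Real.rpow_add hnpos]
            congr 1
            ring
          have h10 : (n:ℝ) ^ (10:ℕ) = n ^ ((10:ℝ)) := by
            rw [← Real.rpow_natCast n 10]; norm_num
          have hne : n ^ (10:ℝ) ≠ 0 := (Real.rpow_pos_of_pos hnpos _).ne'
          rw [h10, ← hexp, Real.rpow_neg hnpos.le (10:ℝ)]
          field_simp
  · -- Part 2: failure of H^{9/2} regularity for a.e. t ≥ 0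
    have hnull : volume (⋃ M : ℕ, ⋃ T : ℕ, boundedSet M T) = 0 :=
      measure_iUnion_null fun M => measure_iUnion_null fun T => volume_boundedSet M T
    rw [ae_restrict_iff' measurableSet_Ici, ae_iff]
    refine measure_mono_null (fun t ht => ?_) hnull
    simp only [mem_setOf_eq, Classical.not_imp, not_not] at ht
    obtain ⟨ht0, hs⟩ := ht
    have hsum := summable_oddTerm_of_solInHs hs
    obtain ⟨T, hT⟩ := exists_nat_ge t
    obtain ⟨M, hM⟩ := exists_nat_ge (∑' m, oddTerm m t)
    refine mem_iUnion.mpr ⟨M, mem_iUnion.mpr ⟨T, ⟨⟨ht0, hT⟩, fun N => ?_⟩⟩⟩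
    exact le_trans (Summable.sum_le_tsum _ (fun i _ => oddTerm_nonneg i t) hsum) hM
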